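/- Let G be a graph, let t, p ∈ ℕ, let u, v ∈ V(G), and let B = (X, Y, Z, C) be a (t,p)-barrier in G separating u from v. Then there exist X' ⊆ X, Y' ⊆ Y, Z' ⊆ Z such that (X', Y', Z', C) is a reduced (t,p)-barrier in G separating u from v. -/

import Mathlib

open SimpleGraph

/-- `H` is an induced minor of `G`: there are pairwise disjoint nonempty connected
induced subgraphs `X w` of `G`, one for each vertex `w` of `H`, such that distinct
branch sets are anticomplete iff the corresponding vertices are non-adjacent in `H`. -/
def IsInducedMinor {V W : Type*} (G : SimpleGraph V) (H : SimpleGraph W) : Prop :=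
  ∃ X : W → Set V,
    (∀ w, (X w).Nonempty) ∧
    (∀ w, (G.induce (X w)).Connected) ∧
    (∀ w₁ w₂, w₁ ≠ w₂ → Disjoint (X w₁) (X w₂)) ∧
    (∀ w₁ w₂, w₁ ≠ w₂ →
      ((∀ a ∈ X w₁, ∀ b ∈ X w₂, ¬ G.Adj a b) ↔ ¬ H.Adj w₁ w₂))

/-- The `t`-by-`t` hexagonal grid (wall), in the brick-wall representation. -/
def hexGrid (t : ℕ) : SimpleGraph (Fin t × Fin (2 * t)) :=
  SimpleGraph.fromRel (fun a b =>
    (a.1 = b.1 ∧ a.2.val + 1 = b.2.val) ∨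
    (a.2 = b.2 ∧ a.1.val + 1 = b.1.val ∧ (a.1.val + a.2.val) % 2 = 0))

/-- Membership in the class `𝒞_t` of `{K_{t,t}, W_{t×t}}`-induced-minor-free graphs. -/
def MemCt (t : ℕ) {V : Type*} (G : SimpleGraph V) : Prop :=
  ¬ IsInducedMinor G (completeBipartiteGraph (Fin t) (Fin t)) ∧
  ¬ IsInducedMinor G (hexGrid t)

/-- Membership in `𝒞_t^*`: member of `𝒞_t` with no clique of size `t`. -/
def MemCtStar (t : ℕ) {V : Type*} (G : SimpleGraph V) : Prop :=
  MemCt t G ∧ G.CliqueFree t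

/-- A tree decomposition of `G` with tree `τ` and bags `χ`. -/
def IsTreeDecomp {V T : Type*} (G : SimpleGraph V) (τ : SimpleGraph T)
    (χ : T → Finset V) : Prop :=
  τ.IsTree ∧
  (∀ v : V, ∃ i, v ∈ χ i) ∧
  (∀ u v : V, G.Adj u v → ∃ i, u ∈ χ i ∧ v ∈ χ i) ∧
  (∀ v : V, (τ.induce {i | v ∈ χ i}).Connected)

/-- The treewidth of a finite graph: the least `k` such that `G` admits a tree
decomposition with all bags of size at most `k + 1`. -/
noncomputable def treewidth {V : Type*} [Fintype V] (G : SimpleGraph V) : ℕ :=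
  sInf { k | ∃ (n : ℕ) (τ : SimpleGraph (Fin n)) (χ : Fin n → Finset V),
    IsTreeDecomp G τ χ ∧ ∀ i, (χ i).card ≤ k + 1 }

/-- A walk that is an induced (chordless) path. -/
def IsInducedPathW {V : Type*} (G : SimpleGraph V) {u v : V} (P : G.Walk u v) : Prop :=
  P.IsPath ∧ ∀ a ∈ P.support, ∀ b ∈ P.support, G.Adj a b → s(a, b) ∈ P.edges

/-- The interior of a path: its support minus its two ends. -/
def interiorW {V : Type*} {G : SimpleGraph V} {u v : V} (P : G.Walk u v) : Set V :=
  {x | x ∈ P.support ∧ x ≠ u ∧ x ≠ v}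

/-- `S` separates `a` from `b` in `G`: every walk from `a` to `b` meets `S`. -/
def Separates {V : Type*} (G : SimpleGraph V) (S : Set V) (a b : V) : Prop :=
  ∀ P : G.Walk a b, ∃ x ∈ S, x ∈ P.support

/-- `conn_G(a,b)`: the minimum size of an `a`–`b`-separator. -/
noncomputable def connNum {V : Type*} [Fintype V] (G : SimpleGraph V) (a b : V) : ℕ :=
  sInf { k | ∃ S : Set V, a ∉ S ∧ b ∉ S ∧ Separates G S a b ∧ S.ncard = k }

/-- `A` and `B` are anticomplete: disjoint, with no edges between them. -/
def Anticomplete {V : Type*} (G : SimpleGraph V) (A B : Set V) : Prop :=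
  Disjoint A B ∧ ∀ a ∈ A, ∀ b ∈ B, ¬ G.Adj a b

/-- The graph `G \ M`: delete the vertices of `M` (they become isolated). -/
def delVerts {V : Type*} (G : SimpleGraph V) (M : Set V) : SimpleGraph V where
  Adj a b := G.Adj a b ∧ a ∉ M ∧ b ∉ M
  symm := ⟨fun _ _ h => ⟨h.1.symm, h.2.2, h.2.1⟩⟩
  loopless := ⟨fun a h => G.ne_of_adj h.1 rfl⟩

/-- The set of connected components of `C` in `G`: maximal connected subsets of `C`. -/
def ccSet {V : Type*} (G : SimpleGraph V) (C : Set V) : Set (Set V) :=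
  { D | D ⊆ C ∧ D.Nonempty ∧ (G.induce D).Connected ∧
      ∀ D' : Set V, D ⊆ D' → D' ⊆ C → (G.induce D').Connected → D' = D }

/-- `(a,b)` is `s`-wide: there are `s` pairwise internally anticomplete `a`–`b`-paths. -/
def Wide {V : Type*} (G : SimpleGraph V) (s : ℕ) (a b : V) : Prop :=
  ∃ P : Fin s → G.Walk a b,
    (∀ i, IsInducedPathW G (P i)) ∧
    (∀ i j, i ≠ j → ∀ x ∈ interiorW (P i), ∀ y ∈ interiorW (P j), x ≠ y ∧ ¬ G.Adj x y)

/-- `(a,b)` is an `s`-slim pair: non-adjacent and not `s`-wide. -/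
def SlimPair {V : Type*} (G : SimpleGraph V) (s : ℕ) (a b : V) : Prop :=
  a ≠ b ∧ ¬ G.Adj a b ∧ ¬ Wide G s a b

/-- `G` is `(t,s)`-slim: every stable set of size `t` contains an `s`-slim pair. -/
def TSSlim {V : Type*} (G : SimpleGraph V) (t s : ℕ) : Prop :=
  ∀ S : Finset V, S.card = t → (∀ a ∈ S, ∀ b ∈ S, a ≠ b → ¬ G.Adj a b) →
    ∃ a ∈ S, ∃ b ∈ S, a ≠ b ∧ SlimPair G s a b

/-- `(X,Y,Z,C)` is a `(t,p)`-barrier in `G`. -/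
def IsTPBarrier {V : Type*} (G : SimpleGraph V) (t p : ℕ) (X Y Z C : Set V) : Prop :=
  List.Pairwise Disjoint [X, Y, Z, C] ∧
  (∀ x ∈ X, ∀ z ∈ Z, ∀ P : G.Walk x z, IsInducedPathW G P →
    (∀ w ∈ P.support, w ∉ C) →
    ∃ x' ∈ X, ∃ z' ∈ Z, ∃ Q : G.Walk x' z',
      IsInducedPathW G Q ∧ (∀ w ∈ Q.support, w ∉ C) ∧
      (∀ w ∈ Q.support, w ∈ P.support) ∧ (∀ w ∈ interiorW Q, w ∈ Y)) ∧
  (∀ x ∈ X, ∀ z ∈ Z, ∀ P : G.Walk x z, IsInducedPathW G P →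
    (∀ w ∈ P.support, w ∉ C) →
    t ≤ Set.ncard { D ∈ ccSet G C | ∃ c ∈ D, ∃ w ∈ P.support, G.Adj c w }) ∧
  (∀ D ∈ ccSet G C, D.ncard ≤ p)

/-- The barrier `(X,Y,Z,C)` separates `u` from `v` in `G`. -/
def BarSeparates {V : Type*} (G : SimpleGraph V) (X Y Z C : Set V) (u v : V) : Prop :=
  u ∉ X ∪ Y ∪ Z ∪ C ∧ v ∉ X ∪ Y ∪ Z ∪ C ∧
  Separates G (X ∪ C) u v ∧ Separates G (Z ∪ C) u v

/-- A barrier is reduced: every component of `X ∪ Y ∪ Z` meets both `X` and `Z`. -/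
def ReducedBarrier {V : Type*} (G : SimpleGraph V) (X Y Z : Set V) : Prop :=
  ∀ D ∈ ccSet G (X ∪ Y ∪ Z), (D ∩ X).Nonempty ∧ (D ∩ Z).Nonempty

/-- `G` is `(s,t,p,c,f,g)`-slim-barred. -/
def SlimBarred {V : Type*} [Fintype V] (G : SimpleGraph V) (s t p : ℕ)
    (c f g : ℕ → ℕ) : Prop :=
  ∀ u v : V, SlimPair G s u v →
    ∃ X Y Z C M : Set V,
      List.Pairwise Disjoint [X, Y, Z, C, M] ∧
      (∀ w ∈ X ∪ Y ∪ Z ∪ C ∪ M, w ≠ u ∧ w ≠ v) ∧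
      IsTPBarrier (delVerts G M) t p X Y Z C ∧
      BarSeparates (delVerts G M) X Y Z C u v ∧
      Set.ncard (ccSet (delVerts G M) C) ≤ c (Fintype.card V) ∧
      M.ncard ≤ f (Fintype.card V) ∧
      (X ∪ Y ∪ Z).ncard ≤ g (Fintype.card V)

/-- `(a,b)` is `(x,y,z,p)`-mineable in `G`. -/
def Mineable {V : Type*} (G : SimpleGraph V) (a b : V) (x y z p : ℕ) : Prop :=
  ∃ Ys Xs : Fin x → Set V,
    (∀ i, a ∉ Ys i ∧ b ∉ Ys i) ∧
    (∀ i j, i ≠ j → Anticomplete G (Ys i) (Ys j)) ∧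
    (∀ i, (Xs i).Nonempty ∧ a ∉ Xs i ∧ b ∉ Xs i ∧
      Xs i ⊆ {w | w ∉ Ys i ∧ ∃ y' ∈ Ys i, G.Adj y' w}) ∧
    (∀ i, Separates (delVerts G {v | ∃ j, j < i ∧ v ∈ Ys j}) (Ys i ∪ Xs i) a b) ∧
    (delVerts G {v | ∃ j, v ∈ Ys j}).Reachable a b ∧
    (∀ i, Set.ncard (ccSet G (Ys i)) ≤ y) ∧
    (∀ i, ∀ D ∈ ccSet G (Ys i), D.ncard ≤ p) ∧
    (∀ w : V, Set.ncard {i : Fin x | w ∈ Ys i ∪ Xs i} ≤ z)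

/-- Two vertices are twins: same neighbourhoods away from each other. -/
def Twins {V : Type*} (G : SimpleGraph V) (u v : V) : Prop :=
  G.neighborSet u \ {v} = G.neighborSet v \ {u}

/-- A star structure on `G`: an induced star forest with vertex set `C ∪ L`, each
component a star with at least two vertices, with centers `C`, leaves `L`, and each
leaf `l` attached to the center `ctr l`. -/
structure StarStructure {V : Type*} (G : SimpleGraph V) (C L : Set V)
    (ctr : V → V) : Prop where
  disj : Disjoint C L
  ctrMem : ∀ l ∈ L, ctr l ∈ C ∧ G.Adj (ctr l) l
  hasLeaf : ∀ c ∈ C, ∃ l ∈ L, ctr l = c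
  inducedStar : ∀ a ∈ C ∪ L, ∀ b ∈ C ∪ L, G.Adj a b →
    (a ∈ C ∧ b ∈ L ∧ ctr b = a) ∨ (b ∈ C ∧ a ∈ L ∧ ctr a = b)

/-- Centers of the projection `F(G')` of the star forest onto the induced subgraph
of `G` with vertex set `W`. -/
def projCenters {V : Type*} (C L : Set V) (ctr : V → V) (W : Set V) : Set V :=
  {c | c ∈ C ∧ c ∈ W ∧ ∃ l, l ∈ L ∧ l ∈ W ∧ ctr l = c}

/-- The star of `F(G')` with center `c`. -/
def projStar {V : Type*} (L : Set V) (ctr : V → V) (W : Set V) (c : V) : Set V :=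
  insert c {l | l ∈ L ∧ l ∈ W ∧ ctr l = c}

/-- The vertex set of `F(G')`. -/
def projVerts {V : Type*} (C L : Set V) (ctr : V → V) (W : Set V) : Set V :=
  ⋃ c ∈ projCenters C L ctr W, projStar L ctr W c

/-- `X` is an `F(G')`-based set. -/
def FBasedSet {V : Type*} (C L : Set V) (ctr : V → V) (W X : Set V) : Prop :=
  ∀ c ∈ projCenters C L ctr W,
    (projStar L ctr W c ∩ X).Nonempty → projStar L ctr W c ⊆ X

/-- The `F(G')`-measure of a set `X`: the number of stars of `F(G')` meeting `X` plus
the number of vertices of `X` outside `F(G')`. -/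
noncomputable def FMeasure {V : Type*} (C L : Set V) (ctr : V → V) (W X : Set V) : ℕ :=
  Set.ncard {c ∈ projCenters C L ctr W | (projStar L ctr W c ∩ X).Nonempty} +
  Set.ncard (X \ projVerts C L ctr W)

/-- A tree decomposition of the induced subgraph of `G` with vertex set `W`. -/
def IsTreeDecompOn {V T : Type*} (G : SimpleGraph V) (W : Set V)
    (τ : SimpleGraph T) (χ : T → Finset V) : Prop :=
  τ.IsTree ∧
  (∀ i, (χ i : Set V) ⊆ W) ∧
  (∀ v ∈ W, ∃ i, v ∈ χ i) ∧
  (∀ u ∈ W, ∀ v ∈ W, G.Adj u v → ∃ i, u ∈ χ i ∧ v ∈ χ i) ∧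
  (∀ v : V, (τ.induce {i | v ∈ χ i}).Connected)

/-- `G` is `(F,r)`-based: every induced subgraph `G[W]` admits a tree decomposition in
which every bag is `F(G[W])`-based with `F(G[W])`-measure at most `r`. -/
def FrBased {V : Type*} [Fintype V] (G : SimpleGraph V) (C L : Set V)
    (ctr : V → V) (r : ℕ) : Prop :=
  ∀ W : Set V, ∃ (n : ℕ) (τ : SimpleGraph (Fin n)) (χ : Fin n → Finset V),
    IsTreeDecompOn G W τ χ ∧
    ∀ i, FBasedSet C L ctr W (χ i) ∧ FMeasure C L ctr W (χ i) ≤ r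

/-- Every component of `H` is a star or a single vertex. -/
def IsStarForest {W : Type*} (H : SimpleGraph W) : Prop :=
  H.IsAcyclic ∧ ∀ (u v : W) (P : H.Walk u v), P.IsPath → P.length ≤ 2

/-- `G` has a star coloring with `k` colors. -/
def HasStarColoring {V : Type*} (G : SimpleGraph V) (k : ℕ) : Prop :=
  ∃ f : V → Fin k, (∀ u v, G.Adj u v → f u ≠ f v) ∧
    ∀ i j : Fin k, IsStarForest (G.induce {v | f v = i ∨ f v = j})

/-- `G` contains an induced subgraph isomorphic to a proper subdivision of `K_s`. -/
def InducedProperSubdivisionK {V : Type*} (G : SimpleGraph V) (s : ℕ) : Prop :=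
  ∃ (v : Fin s → V) (P : ∀ i j : Fin s, G.Walk (v i) (v j)),
    Function.Injective v ∧
    (∀ i j, i ≠ j → ¬ G.Adj (v i) (v j)) ∧
    (∀ i j, i < j → IsInducedPathW G (P i j) ∧ (interiorW (P i j)).Nonempty) ∧
    (∀ i j k l, i < j → k < l → (i, j) ≠ (k, l) →
      ∀ x ∈ interiorW (P i j), ∀ y ∈ interiorW (P k l), x ≠ y ∧ ¬ G.Adj x y) ∧
    (∀ i j k, i < j → k ≠ i → k ≠ j →
      ∀ x ∈ interiorW (P i j), x ≠ v k ∧ ¬ G.Adj x (v k))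

/-- `S` is the vertex set of an induced path of `G`. -/
def IsPathSet {V : Type*} (G : SimpleGraph V) (S : Set V) : Prop :=
  ∃ (u v : V) (P : G.Walk u v), IsInducedPathW G P ∧ S = {x | x ∈ P.support}

/-- A linear induced `H`-model in `G`: an induced `H`-model all of whose branch sets
are paths. -/
def LinearInducedModel {V W : Type*} (G : SimpleGraph V) (H : SimpleGraph W) : Prop :=
  ∃ X : W → Set V,
    (∀ w, IsPathSet G (X w)) ∧
    (∀ w, (X w).Nonempty) ∧
    (∀ w₁ w₂, w₁ ≠ w₂ → Disjoint (X w₁) (X w₂)) ∧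
    (∀ w₁ w₂, w₁ ≠ w₂ →
      ((∀ a ∈ X w₁, ∀ b ∈ X w₂, ¬ G.Adj a b) ↔ ¬ H.Adj w₁ w₂))

namespace Stmt3Aux

variable {V : Type} {G : SimpleGraph V}

lemma reach_mono {A B : Set V} (h : A ⊆ B) {x y : ↥A}
    (hr : (G.induce A).Reachable x y) :
    (G.induce B).Reachable ⟨x.1, h x.2⟩ ⟨y.1, h y.2⟩ :=
  hr.map (⟨fun z => ⟨z.1, h z.2⟩, fun ha => ha⟩ : G.induce A →g G.induce B)

lemma reach_induce_shrink {S D : Set V} : ∀ {a b : ↥S} (W : (G.induce S).Walk a b)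
    (h : ∀ x ∈ W.support, (x : V) ∈ D),
    (G.induce D).Reachable ⟨a.1, h a W.start_mem_support⟩ ⟨b.1, h b W.end_mem_support⟩
  | _, _, Walk.nil, _ => Reachable.refl _
  | _, _, Walk.cons ha W, h => by
      refine Reachable.trans (Adj.reachable ?_)
        (reach_induce_shrink W (fun x hx => h x (by simp [hx])))
      exact ha

lemma exists_cc {S T : Set V} (hTS : T ⊆ S) (hne : T.Nonempty)
    (hconn : (G.induce T).Connected) : ∃ D ∈ ccSet G S, T ⊆ D := by
  classical
  obtain ⟨t0, ht0⟩ := hne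
  set D : Set V := {w | ∃ h : w ∈ S, (G.induce S).Reachable ⟨t0, hTS ht0⟩ ⟨w, h⟩} with hD
  have hDS : D ⊆ S := fun w hw => hw.1
  have hTD : T ⊆ D := by
    intro w hw
    exact ⟨hTS hw, reach_mono hTS (hconn.preconnected ⟨t0, ht0⟩ ⟨w, hw⟩)⟩
  have hreach : ∀ w (hw : w ∈ D), (G.induce D).Reachable ⟨t0, hTD ht0⟩ ⟨w, hw⟩ := by
    intro w hw
    obtain ⟨hwS, ⟨W⟩⟩ := hw
    have hsub : ∀ x ∈ W.support, (x : V) ∈ D := by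
      intro x hx
      exact ⟨x.2, ⟨W.takeUntil x hx⟩⟩
    exact reach_induce_shrink W hsub
  have hconnD : (G.induce D).Connected := by
    rw [connected_iff_exists_forall_reachable]
    exact ⟨⟨t0, hTD ht0⟩, fun w => hreach w.1 w.2⟩
  refine ⟨D, ⟨hDS, ⟨t0, hTD ht0⟩, hconnD, ?_⟩, hTD⟩
  intro D' hDD' hD'S hconn'
  apply Set.Subset.antisymm _ hDD'
  intro w hw
  exact ⟨hD'S hw, reach_mono hD'S (hconn'.preconnected ⟨t0, hDD' (hTD ht0)⟩ ⟨w, hw⟩)⟩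

lemma edges_of_length_one {a b : V} : ∀ (W : G.Walk a b), W.length = 1 → s(a, b) ∈ W.edges
  | Walk.nil, h => by simp at h
  | Walk.cons _ Walk.nil, _ => by simp
  | Walk.cons _ (Walk.cons _ _), h => by simp [Walk.length_cons] at h

lemma exists_induced_walk {a b : V} (W : G.Walk a b) :
    ∃ Q : G.Walk a b, IsInducedPathW G Q ∧ ∀ x ∈ Q.support, x ∈ W.support := by
  classical
  have hex : ∃ n, ∃ Q : G.Walk a b, Q.length = n ∧ ∀ x ∈ Q.support, x ∈ W.support :=
    ⟨W.length, W, rfl, fun x hx => hx⟩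
  obtain ⟨Q0, hQ0len, hQ0sub⟩ := Nat.find_spec hex
  set Q := Q0.bypass with hQdef
  have hQpath : Q.IsPath := Q0.bypass_isPath
  have hQsub : ∀ x ∈ Q.support, x ∈ W.support :=
    fun x hx => hQ0sub x (Q0.support_bypass_subset hx)
  have h1 : Q.length ≤ Nat.find hex := hQ0len ▸ Q0.length_bypass_le
  refine ⟨Q, ⟨hQpath, ?_⟩, hQsub⟩
  intro x hx y hy hadj
  by_contra hne
  set Tk := Q.takeUntil x hx with hTk
  set D := Q.dropUntil x hx with hD
  have hQsplit : Tk.length + D.length = Q.length := by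
    have h := congrArg Walk.length (Q.take_spec hx)
    rwa [Walk.length_append] at h
  by_cases hyD : y ∈ D.support
  · set D2 := D.dropUntil y hyD with hD2
    set R : G.Walk a b := Tk.append (Walk.cons hadj D2) with hR
    have hlen : (D.takeUntil y hyD).length + D2.length = D.length := by
      have h := congrArg Walk.length (D.take_spec hyD)
      rwa [Walk.length_append] at h
    have h0 : (D.takeUntil y hyD).length ≠ 0 :=
      fun h => hadj.ne (Walk.eq_of_length_eq_zero h)
    have h1' : (D.takeUntil y hyD).length ≠ 1 := fun h => hne
      (Q.edges_dropUntil_subset hx (D.edges_takeUntil_subset hyD (edges_of_length_one _ h)))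
    have hRlen : R.length < Q.length := by
      have : R.length = Tk.length + (D2.length + 1) := by
        simp [hR, Walk.length_append]
      omega
    have hRsub : ∀ w ∈ R.support, w ∈ W.support := by
      intro w hw
      rw [hR, Walk.mem_support_append_iff] at hw
      rcases hw with hw | hw
      · exact hQsub w (Q.support_takeUntil_subset hx hw)
      · rw [Walk.support_cons, List.mem_cons] at hw
        rcases hw with rfl | hw
        · exact hQsub w hx
        · exact hQsub w (Q.support_dropUntil_subset hx (D.support_dropUntil_subset hyD hw))
    exact Nat.find_min hex (lt_of_lt_of_le hRlen h1) ⟨R, rfl, hRsub⟩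
  · have hyT : y ∈ Tk.support := by
      have hy' := hy
      rw [← Q.take_spec hx, Walk.mem_support_append_iff] at hy'
      exact hy'.resolve_right hyD
    set Tk2 := Tk.takeUntil y hyT with hTk2
    set R : G.Walk a b := Tk2.append (Walk.cons hadj.symm D) with hR
    have hlen : Tk2.length + (Tk.dropUntil y hyT).length = Tk.length := by
      have h := congrArg Walk.length (Tk.take_spec hyT)
      rwa [Walk.length_append] at h
    have h0 : (Tk.dropUntil y hyT).length ≠ 0 :=
      fun h => hadj.ne' (Walk.eq_of_length_eq_zero h)
    have h1' : (Tk.dropUntil y hyT).length ≠ 1 := fun h => hne (by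
      have := Q.edges_takeUntil_subset hx (Tk.edges_dropUntil_subset hyT (edges_of_length_one _ h))
      rwa [Sym2.eq_swap] at this)
    have hRlen : R.length < Q.length := by
      have : R.length = Tk2.length + (D.length + 1) := by
        simp [hR, Walk.length_append]
      omega
    have hRsub : ∀ w ∈ R.support, w ∈ W.support := by
      intro w hw
      rw [hR, Walk.mem_support_append_iff] at hw
      rcases hw with hw | hw
      · exact hQsub w (Q.support_takeUntil_subset hx (Tk.support_takeUntil_subset hyT hw))
      · rw [Walk.support_cons, List.mem_cons] at hw
        rcases hw with rfl | hw
        · exact hQsub w (Q.support_takeUntil_subset hx hyT)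
        · exact hQsub w (Q.support_dropUntil_subset hx hw)
    exact Nat.find_min hex (lt_of_lt_of_le hRlen h1) ⟨R, rfl, hRsub⟩

end Stmt3Aux

theorem stmt3 {V : Type} (G : SimpleGraph V) (t p : ℕ) (u v : V)
    (X Y Z C : Set V)
    (hB : IsTPBarrier G t p X Y Z C)
    (hsep : BarSeparates G X Y Z C u v) :
    ∃ X' Y' Z' : Set V, X' ⊆ X ∧ Y' ⊆ Y ∧ Z' ⊆ Z ∧
      IsTPBarrier G t p X' Y' Z' C ∧ ReducedBarrier G X' Y' Z' ∧
      BarSeparates G X' Y' Z' C u v := by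
  classical
  obtain ⟨hdisj, hb1, hb2, hb3⟩ := hB
  set K : Set V := ⋃₀ {D | D ∈ ccSet G (X ∪ Y ∪ Z) ∧ (D ∩ X).Nonempty ∧ (D ∩ Z).Nonempty}
    with hK
  have hKsub : K ⊆ X ∪ Y ∪ Z := by
    rintro w ⟨D, ⟨hD, _, _⟩, hw⟩
    exact hD.1 hw
  have hunion : X ∩ K ∪ Y ∩ K ∪ Z ∩ K = K := by
    rw [← Set.union_inter_distrib_right, ← Set.union_inter_distrib_right]
    exact Set.inter_eq_right.mpr hKsub
  -- key: every x–z path with interior in Y has support in K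
  have hkey : ∀ {x' z' : V} (Q : G.Walk x' z'), x' ∈ X → z' ∈ Z →
      (∀ w ∈ interiorW Q, w ∈ Y) → ∀ w ∈ Q.support, w ∈ K := by
    intro x' z' Q hx hz hint
    have hsupXYZ : {w | w ∈ Q.support} ⊆ X ∪ Y ∪ Z := by
      intro w hw
      by_cases h1 : w = x'
      · exact h1 ▸ Or.inl (Or.inl hx)
      by_cases h2 : w = z'
      · exact h2 ▸ Or.inr hz
      · exact Or.inl (Or.inr (hint w ⟨hw, h1, h2⟩))
    obtain ⟨D, hD, hsubD⟩ := Stmt3Aux.exists_cc hsupXYZ ⟨x', Q.start_mem_support⟩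
      Q.connected_induce_support
    intro w hw
    exact ⟨D, ⟨hD, ⟨x', hsubD Q.start_mem_support, hx⟩, ⟨z', hsubD Q.end_mem_support, hz⟩⟩,
      hsubD hw⟩
  -- main separation helper
  have hmain : ∀ P : G.Walk u v, (∀ w ∈ P.support, w ∉ C) →
      ∃ x'' ∈ X ∩ K, x'' ∈ P.support ∧ ∃ z'' ∈ Z ∩ K, z'' ∈ P.support := by
    intro P hPC
    obtain ⟨x0, hx0, hx0P⟩ := hsep.2.2.1 P
    obtain ⟨z0, hz0, hz0P⟩ := hsep.2.2.2 P
    have hx0X : x0 ∈ X := hx0.resolve_right (hPC x0 hx0P)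
    have hz0Z : z0 ∈ Z := hz0.resolve_right (hPC z0 hz0P)
    set W : G.Walk x0 z0 := (P.takeUntil x0 hx0P).reverse.append (P.takeUntil z0 hz0P) with hW
    have hWsub : ∀ w ∈ W.support, w ∈ P.support := by
      intro w hw
      rw [hW, Walk.mem_support_append_iff, Walk.support_reverse, List.mem_reverse] at hw
      rcases hw with hw | hw
      · exact P.support_takeUntil_subset hx0P hw
      · exact P.support_takeUntil_subset hz0P hw
    obtain ⟨Q0, hQ0ind, hQ0sub⟩ := Stmt3Aux.exists_induced_walk W
    have hQ0C : ∀ w ∈ Q0.support, w ∉ C := fun w hw => hPC w (hWsub w (hQ0sub w hw))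
    obtain ⟨x'', hx''X, z'', hz''Z, Q, hQind, hQC, hQsub, hQintY⟩ :=
      hb1 x0 hx0X z0 hz0Z Q0 hQ0ind hQ0C
    have hQP : ∀ w ∈ Q.support, w ∈ P.support :=
      fun w hw => hWsub w (hQ0sub w (hQsub w hw))
    have hQK := hkey Q hx''X hz''Z hQintY
    exact ⟨x'', ⟨hx''X, hQK x'' Q.start_mem_support⟩, hQP x'' Q.start_mem_support,
      z'', ⟨hz''Z, hQK z'' Q.end_mem_support⟩, hQP z'' Q.end_mem_support⟩
  refine ⟨X ∩ K, Y ∩ K, Z ∩ K, Set.inter_subset_left, Set.inter_subset_left,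
    Set.inter_subset_left, ⟨?_, ?_, ?_, hb3⟩, ?_, ?_, ?_, ?_, ?_⟩
  · -- pairwise disjoint
    have h1 := List.pairwise_cons.mp hdisj
    have h2 := List.pairwise_cons.mp h1.2
    have h3 := List.pairwise_cons.mp h2.2
    have hXY : Disjoint X Y := h1.1 Y (by simp)
    have hXZ : Disjoint X Z := h1.1 Z (by simp)
    have hXC : Disjoint X C := h1.1 C (by simp)
    have hYZ : Disjoint Y Z := h2.1 Z (by simp)
    have hYC : Disjoint Y C := h2.1 C (by simp)
    have hZC : Disjoint Z C := h3.1 C (by simp)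
    refine List.Pairwise.cons ?_ (List.Pairwise.cons ?_ (List.Pairwise.cons ?_
      (List.pairwise_singleton _ _)))
    · intro a ha
      simp only [List.mem_cons, List.not_mem_nil, or_false] at ha
      rcases ha with rfl | rfl | rfl
      · exact hXY.mono Set.inter_subset_left Set.inter_subset_left
      · exact hXZ.mono Set.inter_subset_left Set.inter_subset_left
      · exact hXC.mono_left Set.inter_subset_left
    · intro a ha
      simp only [List.mem_cons, List.not_mem_nil, or_false] at ha
      rcases ha with rfl | rfl
      · exact hYZ.mono Set.inter_subset_left Set.inter_subset_left
      · exact hYC.mono_left Set.inter_subset_left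
    · intro a ha
      simp only [List.mem_cons, List.not_mem_nil, or_false] at ha
      subst ha
      exact hZC.mono_left Set.inter_subset_left
  · -- condition (1)
    intro x hx z hz P hP hPC
    obtain ⟨x', hx'X, z', hz'Z, Q, hQind, hQC, hQsub, hQintY⟩ :=
      hb1 x hx.1 z hz.1 P hP hPC
    have hQK := hkey Q hx'X hz'Z hQintY
    exact ⟨x', ⟨hx'X, hQK x' Q.start_mem_support⟩, z', ⟨hz'Z, hQK z' Q.end_mem_support⟩,
      Q, hQind, hQC, hQsub, fun w hw => ⟨hQintY w hw, hQK w hw.1⟩⟩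
  · -- condition (2)
    intro x hx z hz P hP hPC
    exact hb2 x hx.1 z hz.1 P hP hPC
  · -- reduced
    intro D hD
    rw [hunion] at hD
    obtain ⟨hDK, ⟨d, hd⟩, hDconn, hDmax⟩ := hD
    obtain ⟨D0, ⟨hD0cc, hD0X, hD0Z⟩, hdD0⟩ := hDK hd
    obtain ⟨hD0sub, hD0ne, hD0conn, hD0max⟩ := hD0cc
    have hUconn : (G.induce (D ∪ D0)).Connected :=
      induce_union_connected hDconn.preconnected hD0conn.preconnected ⟨d, hd, hdD0⟩
    have hUsub : D ∪ D0 ⊆ X ∪ Y ∪ Z := Set.union_subset (hDK.trans hKsub) hD0sub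
    have hUD0 : D ∪ D0 = D0 := hD0max _ Set.subset_union_right hUsub hUconn
    have hDD0 : D ⊆ D0 := by
      rw [← hUD0]
      exact Set.subset_union_left
    have hD0K : D0 ⊆ K := fun w hw =>
      ⟨D0, ⟨⟨hD0sub, hD0ne, hD0conn, hD0max⟩, hD0X, hD0Z⟩, hw⟩
    have hD0D : D0 = D := hDmax D0 hDD0 hD0K hD0conn
    constructor
    · obtain ⟨x0, hx0D0, hx0X⟩ := hD0X
      exact ⟨x0, hD0D ▸ hx0D0, hx0X, hD0K (hD0D ▸ hx0D0 : x0 ∈ D0)⟩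
    · obtain ⟨z0, hz0D0, hz0Z⟩ := hD0Z
      exact ⟨z0, hD0D ▸ hz0D0, hz0Z, hD0K (hD0D ▸ hz0D0 : z0 ∈ D0)⟩
  · -- u not in
    intro h
    apply hsep.1
    rcases h with ((h | h) | h) | h
    · exact Or.inl (Or.inl (Or.inl h.1))
    · exact Or.inl (Or.inl (Or.inr h.1))
    · exact Or.inl (Or.inr h.1)
    · exact Or.inr h
  · -- v not in
    intro h
    apply hsep.2.1
    rcases h with ((h | h) | h) | h
    · exact Or.inl (Or.inl (Or.inl h.1))
    · exact Or.inl (Or.inl (Or.inr h.1))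
    · exact Or.inl (Or.inr h.1)
    · exact Or.inr h
  · -- Separates (X∩K ∪ C)
    intro P
    by_cases hPC : ∀ w ∈ P.support, w ∉ C
    · obtain ⟨x'', hx'', hx''P, _⟩ := hmain P hPC
      exact ⟨x'', Or.inl hx'', hx''P⟩
    · push_neg at hPC
      obtain ⟨w, hw, hwC⟩ := hPC
      exact ⟨w, Or.inr hwC, hw⟩
  · -- Separates (Z∩K ∪ C)
    intro P
    by_cases hPC : ∀ w ∈ P.support, w ∉ C
    · obtain ⟨_, _, _, z'', hz'', hz''P⟩ := hmain P hPC
      exact ⟨z'', Or.inl hz'', hz''P⟩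
    · push_neg at hPC
      obtain ⟨w, hw, hwC⟩ := hPC
      exact ⟨w, Or.inr hwC, hw⟩
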